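/- arXiv:2002.06768 — 2 statements merged into one kernel-verified Lean document; each statement's English description precedes it below -/
import Mathlib

section
/- Let M be a real symmetric positive semi-definite n×n matrix and H a real n×n matrix such that H + Hᵀ is negative semi-definite. Then every eigenvalue of M·H has non-positive real part. -/
open Matrix
open scoped ComplexOrder

lemma map_ofReal_posSemidef {n : ℕ} {A : Matrix (Fin n) (Fin n) ℝ} (hA : A.PosSemidef) :
    (A.map (Complex.ofReal)).PosSemidef := by
  obtain ⟨B, rfl⟩ : ∃ B : Matrix (Fin n) (Fin n) ℝ, A = Bᴴ * B := by
    classical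
    open scoped MatrixOrder in
    obtain ⟨X, hX, -, hXA⟩ :=
      CFC.exists_sqrt_of_isSelfAdjoint_of_quasispectrumRestricts hA.isHermitian
        (QuasispectrumRestricts.nnreal_of_nonneg hA.nonneg)
    refine ⟨X, ?_⟩
    rw [← hXA]
    congr 1
    exact hX.star_eq.symm
  refine Matrix.posSemidef_conjTranspose_mul_self (B.map Complex.ofReal) |> fun h => ?_
  have h1 : (Bᴴ * B).map (Complex.ofReal : ℝ → ℂ) =
      Bᴴ.map Complex.ofReal * B.map Complex.ofReal := by
    ext i j
    simp [Matrix.mul_apply, Matrix.map_apply]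
  rw [h1, Matrix.conjTranspose_map]
  exact h
  intro x
  simp [Complex.conj_ofReal]

lemma conjTranspose_map_ofReal {n : ℕ} (A : Matrix (Fin n) (Fin n) ℝ) :
    (A.map (Complex.ofReal))ᴴ = Aᵀ.map Complex.ofReal := by
  ext i j
  simp [Matrix.conjTranspose_apply, Matrix.map_apply, Complex.conj_ofReal]

/-- If `M` is real symmetric PSD and `H + Hᵀ` is negative semidefinite, then every
eigenvalue of `M * H` has nonpositive real part. -/
theorem stmt_5 (n : ℕ) (M H : Matrix (Fin n) (Fin n) ℝ)
    (hM : M.PosSemidef) (hH : (-(H + Hᵀ)).PosSemidef)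
    (μ : ℂ) (hμ : μ ∈ spectrum ℂ ((M * H).map (Complex.ofReal))) :
    μ.re ≤ 0 := by
  set A : Matrix (Fin n) (Fin n) ℂ := M.map Complex.ofReal with hAdef
  set B : Matrix (Fin n) (Fin n) ℂ := H.map Complex.ofReal with hBdef
  have hmap : (M * H).map (Complex.ofReal : ℝ → ℂ) = A * B := by
    ext i j
    simp [Matrix.mul_apply, Matrix.map_apply, hAdef, hBdef]
  have hA : A.PosSemidef := map_ofReal_posSemidef hM
  have hBH : (-(B + Bᴴ)).PosSemidef := by
    have h : (-(H + Hᵀ)).map (Complex.ofReal : ℝ → ℂ) = -(B + Bᴴ) := by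
      rw [hBdef, conjTranspose_map_ofReal]
      ext i j
      simp [Matrix.map_apply]
    rw [← h]
    exact map_ofReal_posSemidef hH
  rw [hmap] at hμ
  -- get an eigenvector
  rw [← AlgEquiv.spectrum_eq (Matrix.toLinAlgEquiv' : Matrix (Fin n) (Fin n) ℂ ≃ₐ[ℂ] _),
    ← Module.End.hasEigenvalue_iff_mem_spectrum] at hμ
  obtain ⟨v, hv⟩ := hμ.exists_hasEigenvector
  have hv0 : v ≠ 0 := hv.right
  have hveq : (A * B) *ᵥ v = μ • v := by
    have := hv.apply_eq_smul
    rwa [Matrix.toLinAlgEquiv'_apply] at this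
  set u : Fin n → ℂ := B *ᵥ v with hudef
  set q : ℂ := star u ⬝ᵥ (A *ᵥ u) with hqdef
  set c : ℂ := star u ⬝ᵥ v with hcdef
  set s : ℂ := star v ⬝ᵥ (B *ᵥ v) with hsdef
  have hAu : A *ᵥ u = μ • v := by
    rw [hudef, Matrix.mulVec_mulVec, hveq]
  have hq1 : q = μ * c := by
    rw [hqdef, hAu, dotProduct_smul, hcdef, smul_eq_mul]
  have hqnn : 0 ≤ q := hA.dotProduct_mulVec_nonneg u
  have hqre : 0 ≤ q.re := (Complex.nonneg_iff.mp hqnn).1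
  have hqim : q.im = 0 := ((Complex.nonneg_iff.mp hqnn).2).symm
  -- c = star s
  have hcs : c = star s := by
    rw [hcdef, hudef, hsdef, Matrix.star_mulVec, ← Matrix.dotProduct_mulVec,
      Matrix.star_dotProduct, Matrix.mulVec_conjTranspose, star_star,
      ← Matrix.dotProduct_mulVec]
  -- real part of c is ≤ 0
  have hcre : c.re ≤ 0 := by
    have h2 := hBH.dotProduct_mulVec_nonneg v
    have h3 : (star v ⬝ᵥ ((B + Bᴴ) *ᵥ v)).re ≤ 0 := by
      have h4 := (Complex.nonneg_iff.mp h2).1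
      have hneg : star v ⬝ᵥ ((-(B + Bᴴ)) *ᵥ v) = -(star v ⬝ᵥ ((B + Bᴴ) *ᵥ v)) := by
        simp only [Matrix.neg_mulVec, dotProduct_neg]
      rw [hneg] at h4
      simpa using h4
    have hsplit : star v ⬝ᵥ ((B + Bᴴ) *ᵥ v) = s + c := by
      rw [Matrix.add_mulVec, dotProduct_add, hsdef, hcdef, hudef, Matrix.star_mulVec,
        ← Matrix.dotProduct_mulVec]
    rw [hsplit] at h3
    have hre : s.re = c.re := by rw [hcs]; simp
    simp only [Complex.add_re, hre] at h3
    linarith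
  by_cases hc : c = 0
  · -- then q = 0, so A *ᵥ u = 0, so μ • v = 0, so μ = 0
    have hq0 : q = 0 := by rw [hq1, hc, mul_zero]
    have hAu0 : A *ᵥ u = 0 := (hA.dotProduct_mulVec_zero_iff u).mp hq0
    rw [hAu] at hAu0
    rcases smul_eq_zero.mp hAu0 with hμ0 | hv0'
    · simp [hμ0]
    · exact absurd hv0' hv0
  · have hμeq : μ = q * c⁻¹ := by
      field_simp [hq1]
      exact hq1.symm
    have hinv : (c⁻¹).re ≤ 0 := by
      rw [Complex.inv_re]
      exact div_nonpos_of_nonpos_of_nonneg hcre (Complex.normSq_nonneg c)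
    rw [hμeq, Complex.mul_re, hqim]
    simpa using mul_nonpos_of_nonneg_of_nonpos hqre hinv
end

section
/- Fix ε ∈ ℂ with Re(ε) ≤ 0 and ε ≠ 0. The quadratic equation λ² - (1+2ε)λ + ε = 0 (equivalently λ(λ-1)/(2λ-1) = ε) has two roots λ₁, λ₂, and for |ε| sufficiently small both roots satisfy |λᵢ| < 1. -/
/-- There exists `δ > 0` such that for every `ε` with `Re ε < 0` and `0 < |ε| < δ`,
both roots of `λ² - (1 + 2ε)λ + ε = 0` have modulus less than one. -/
theorem stmt_14 :
    ∃ δ > (0 : ℝ), ∀ ε : ℂ, ε.re < 0 → ε ≠ 0 → ‖ε‖ < δ →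
      ∀ lam : ℂ, lam ^ 2 - (1 + 2 * ε) * lam + ε = 0 → ‖lam‖ < 1 := by
  refine ⟨1/10, by norm_num, ?_⟩
  intro ε hre hne habs lam heq
  by_contra hlam
  push_neg at hlam
  set μ : ℂ := 1 + 2 * ε - lam with hμdef
  have hprod : lam * μ = ε := by rw [hμdef]; linear_combination -heq
  have habsprod : ‖lam‖ * ‖μ‖ = ‖ε‖ := by
    rw [← norm_mul, hprod]
  have hμnn : (0:ℝ) ≤ ‖μ‖ := norm_nonneg _
  have hμabs : ‖μ‖ < 1/10 := by nlinarith
  have hεre : |ε.re| ≤ ‖ε‖ := Complex.abs_re_le_norm ε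
  have hμre : |μ.re| ≤ ‖μ‖ := Complex.abs_re_le_norm μ
  have hεre' := abs_le.mp hεre
  have hμre' := abs_le.mp hμre
  have hμre2 : μ.re = 1 + 2 * ε.re - lam.re := by
    rw [hμdef]; simp
  have hx : 1/2 < lam.re := by
    have : lam.re = 1 + 2 * ε.re - μ.re := by rw [hμre2]; ring
    rw [this]
    linarith
  -- extract real and imaginary parts of the equation
  have h1 := congrArg Complex.re heq
  have h2 := congrArg Complex.im heq
  simp [Complex.add_re, Complex.sub_re, Complex.mul_re, Complex.mul_im, Complex.add_im,
    Complex.sub_im, pow_two] at h1 h2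
  have hkey : ε.re * ((2*lam.re - 1)^2 + (2*lam.im)^2)
      = (2*lam.re - 1) * ((lam.re^2 + lam.im^2) - lam.re) := by
    linear_combination (-(2*lam.re - 1)) * h1 + (-(2*lam.im)) * h2
  have hsq : lam.re^2 + lam.im^2 < lam.re := by
    have hpos : (0:ℝ) < (2*lam.re - 1)^2 + (2*lam.im)^2 := by nlinarith
    nlinarith
  have hxle : lam.re ≤ ‖lam‖ := Complex.re_le_norm lam
  have habs2 : (‖lam‖)^2 = lam.re^2 + lam.im^2 := by
    rw [Complex.sq_norm, Complex.normSq_apply]; ring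
  nlinarith
end
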